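/- Let μ₁, μ₂ ∈ ℝ and σ₁, σ₂ > 0, and for j, k ∈ ℤ define μ(j,k) = ((μ₁ + 2πj) σ₂² + (μ₂ + 2πk) σ₁²)/(σ₁² + σ₂²), σ̄ = √(σ₁² σ₂² / (σ₁² + σ₂²)), and w(j,k) = exp(−((μ₁ + 2πj) − (μ₂ + 2πk))² / (2(σ₁² + σ₂²))) / √(2π(σ₁² + σ₂²)). Then the first circular moment of the renormalized product of the two wrapped normal densities satisfies (∫_0^{2π} exp(i x) f_WN(x; μ₁, σ₁) f_WN(x; μ₂, σ₂) dx) / (∫_0^{2π} f_WN(x; μ₁, σ₁) f_WN(x; μ₂, σ₂) dx) = (∑_{j,k ∈ ℤ} w(j,k) ∫_0^{2π} exp(i x) N(x; μ(j,k), σ̄) dx) / (∑_{j,k ∈ ℤ} w(j,k) ∫_0^{2π} N(x; μ(j,k), σ̄) dx). -/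

import Mathlib

open MeasureTheory

/-- Wrapped normal density with location `μ` and concentration `σ`. -/
noncomputable def wnDensity (μ σ x : ℝ) : ℝ :=
  (1 / (Real.sqrt (2 * Real.pi) * σ)) *
    ∑' k : ℤ, Real.exp (-(x - μ + 2 * Real.pi * (k : ℝ)) ^ 2 / (2 * σ ^ 2))

/-- One-dimensional Gaussian density with mean `μ` and standard deviation `σ`. -/
noncomputable def gaussDensity (μ σ x : ℝ) : ℝ :=
  (1 / (Real.sqrt (2 * Real.pi) * σ)) * Real.exp (-(x - μ) ^ 2 / (2 * σ ^ 2))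

lemma gaussDensity_nonneg (μ σ x : ℝ) (hσ : 0 < σ) : 0 ≤ gaussDensity μ σ x := by
  unfold gaussDensity
  have := Real.pi_pos
  positivity

lemma gaussDensity_continuous (μ σ : ℝ) : Continuous (gaussDensity μ σ) := by
  unfold gaussDensity
  fun_prop

lemma summable_exp_lin_quad (a b : ℝ) (hb : 0 < b) :
    Summable fun j : ℤ => Real.exp (a * |(j : ℝ)| - b * (j : ℝ) ^ 2) := by
  have key : Summable fun n : ℕ => Real.exp (a * (n : ℝ) - b * (n : ℝ) ^ 2) := by
    have hbound : ∀ n : ℕ, Real.exp (a * (n : ℝ) - b * (n : ℝ) ^ 2) ≤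
        Real.exp (a ^ 2 / (2 * b)) * Real.exp (-(b / 2)) ^ n := by
      intro n
      rw [← Real.exp_nat_mul, ← Real.exp_add]
      apply Real.exp_le_exp.2
      have h1 : a * (n : ℝ) - b * (n : ℝ) ^ 2 ≤ a ^ 2 / (2 * b) - (b / 2) * (n : ℝ) ^ 2 := by
        rw [sub_le_sub_iff, div_add' _ _ _ (by positivity)]
        rw [le_div_iff₀ (by positivity)]
        nlinarith [sq_nonneg (a - b * (n : ℝ))]
      have h2 : (n : ℝ) ≤ (n : ℝ) ^ 2 := by
        rcases Nat.eq_zero_or_pos n with h | h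
        · simp [h]
        · have : (1:ℝ) ≤ (n:ℝ) := by exact_mod_cast h
          nlinarith
      nlinarith
    apply Summable.of_nonneg_of_le (fun n => (Real.exp_pos _).le) hbound
    exact (summable_geometric_of_lt_one (by positivity)
      (Real.exp_lt_one_iff.2 (by linarith))).mul_left _
  apply Summable.of_nat_of_neg
  · simpa using key
  · refine key.congr fun n => ?_
    push_cast
    rw [abs_neg, abs_of_nonneg (Nat.cast_nonneg n)]
    ring_nf

lemma gaussDensity_bound (m σ x : ℝ) (hσ : 0 < σ) (hx : |x| ≤ 2 * Real.pi) (j : ℤ) :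
    gaussDensity (m + 2 * Real.pi * j) σ x ≤
      (1 / (Real.sqrt (2 * Real.pi) * σ)) *
        Real.exp ((2 * Real.pi * (|m| + 2 * Real.pi) / σ ^ 2) * |(j : ℝ)|
          - (2 * Real.pi ^ 2 / σ ^ 2) * (j : ℝ) ^ 2) := by
  have hπ := Real.pi_pos
  unfold gaussDensity
  apply mul_le_mul_of_nonneg_left _ (by positivity)
  apply Real.exp_le_exp.2
  set t : ℝ := 2 * Real.pi * |(j : ℝ)| with ht
  set A : ℝ := |m| + 2 * Real.pi with hA
  have ht0 : 0 ≤ t := by positivity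
  have hsq : t ^ 2 - 2 * t * A ≤ (x - (m + 2 * Real.pi * j)) ^ 2 := by
    have habs : t - A ≤ |x - (m + 2 * Real.pi * j)| := by
      have h1 : |2 * Real.pi * (j : ℝ)| - |m - x| ≤ |x - (m + 2 * Real.pi * j)| := by
        have := abs_sub_abs_le_abs_sub (2 * Real.pi * (j : ℝ)) (x - m)
        have h2 : |2 * Real.pi * (j:ℝ) - (x - m)| = |x - (m + 2 * Real.pi * j)| := by
          rw [← abs_neg]; ring_nf
        have h3 : |x - m| = |m - x| := abs_sub_comm _ _
        linarith [abs_sub_abs_le_abs_sub (2 * Real.pi * (j : ℝ)) (x - m), h2 ▸ this]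
      have h4 : |2 * Real.pi * (j : ℝ)| = t := by
        rw [ht, abs_mul, abs_of_nonneg (by positivity : (0:ℝ) ≤ 2 * Real.pi)]
      have h5 : |m - x| ≤ A := by
        calc |m - x| ≤ |m| + |x| := abs_sub _ _
        _ ≤ A := by rw [hA]; linarith
      linarith
    rcases le_or_gt t A with h | h
    · nlinarith [sq_nonneg (x - (m + 2 * Real.pi * j)), mul_nonneg ht0 (sub_nonneg.2 h)]
    · have h0 : 0 ≤ t - A := by linarith
      have := sq_abs (x - (m + 2 * Real.pi * j))
      nlinarith [pow_le_pow_left₀ h0 habs 2, sq_nonneg A]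
  have hrw : (2 * Real.pi * A / σ ^ 2) * |(j : ℝ)| - (2 * Real.pi ^ 2 / σ ^ 2) * (j : ℝ) ^ 2
      = -(t ^ 2 - 2 * t * A) / (2 * σ ^ 2) := by
    have hu2 : |(j : ℝ)| ^ 2 = (j : ℝ) ^ 2 := sq_abs _
    rw [ht, ← hu2]
    field_simp
    ring_nf
  rw [hrw]
  gcongr

lemma wnDensity_eq_tsum (μ σ x : ℝ) :
    wnDensity μ σ x = ∑' j : ℤ, gaussDensity (μ + 2 * Real.pi * j) σ x := by
  unfold wnDensity gaussDensity
  rw [tsum_mul_left]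
  congr 1
  rw [← (Equiv.neg ℤ).tsum_eq
    (fun k : ℤ => Real.exp (-(x - μ + 2 * Real.pi * (k : ℝ)) ^ 2 / (2 * σ ^ 2)))]
  apply tsum_congr
  intro j
  simp only [Equiv.neg_apply]
  congr 2
  push_cast
  ring

lemma gauss_product (σ₁ σ₂ : ℝ) (hσ₁ : 0 < σ₁) (hσ₂ : 0 < σ₂) (a b x : ℝ) :
    gaussDensity a σ₁ x * gaussDensity b σ₂ x =
      (Real.exp (-(a - b) ^ 2 / (2 * (σ₁ ^ 2 + σ₂ ^ 2))) /
          Real.sqrt (2 * Real.pi * (σ₁ ^ 2 + σ₂ ^ 2))) *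
        gaussDensity ((a * σ₂ ^ 2 + b * σ₁ ^ 2) / (σ₁ ^ 2 + σ₂ ^ 2))
          (Real.sqrt (σ₁ ^ 2 * σ₂ ^ 2 / (σ₁ ^ 2 + σ₂ ^ 2))) x := by
  have hπ := Real.pi_pos
  have hs : 0 < σ₁ ^ 2 + σ₂ ^ 2 := by positivity
  set s := σ₁ ^ 2 + σ₂ ^ 2 with hsdef
  set σb := Real.sqrt (σ₁ ^ 2 * σ₂ ^ 2 / s) with hσbdef
  have hσb2 : σb ^ 2 = σ₁ ^ 2 * σ₂ ^ 2 / s := Real.sq_sqrt (by positivity)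
  have hσb : 0 < σb := Real.sqrt_pos.2 (by positivity)
  unfold gaussDensity
  have hE : -(x - a) ^ 2 / (2 * σ₁ ^ 2) + -(x - b) ^ 2 / (2 * σ₂ ^ 2) =
      -(a - b) ^ 2 / (2 * s) + -(x - (a * σ₂ ^ 2 + b * σ₁ ^ 2) / s) ^ 2 / (2 * σb ^ 2) := by
    rw [hσb2]
    field_simp
    ring
  have hss : Real.sqrt s ≠ 0 := ne_of_gt (Real.sqrt_pos.2 hs)
  have hC : (1 / (Real.sqrt (2 * Real.pi) * σ₁)) * (1 / (Real.sqrt (2 * Real.pi) * σ₂)) =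
      (1 / Real.sqrt (2 * Real.pi * s)) * (1 / (Real.sqrt (2 * Real.pi) * σb)) := by
    have hσb' : σb = σ₁ * σ₂ / Real.sqrt s := by
      rw [hσbdef, ← mul_pow, Real.sqrt_div (by positivity), Real.sqrt_sq (by positivity)]
    rw [Real.sqrt_mul (by positivity) s, hσb']
    have h2π : Real.sqrt (2 * Real.pi) ≠ 0 := by positivity
    field_simp
  calc (1 / (Real.sqrt (2 * Real.pi) * σ₁)) * Real.exp (-(x - a) ^ 2 / (2 * σ₁ ^ 2)) *
        ((1 / (Real.sqrt (2 * Real.pi) * σ₂)) * Real.exp (-(x - b) ^ 2 / (2 * σ₂ ^ 2)))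
      = ((1 / (Real.sqrt (2 * Real.pi) * σ₁)) * (1 / (Real.sqrt (2 * Real.pi) * σ₂))) *
        Real.exp (-(x - a) ^ 2 / (2 * σ₁ ^ 2) + -(x - b) ^ 2 / (2 * σ₂ ^ 2)) := by
        rw [Real.exp_add]; ring
    _ = ((1 / Real.sqrt (2 * Real.pi * s)) * (1 / (Real.sqrt (2 * Real.pi) * σb))) *
        (Real.exp (-(a - b) ^ 2 / (2 * s)) *
          Real.exp (-(x - (a * σ₂ ^ 2 + b * σ₁ ^ 2) / s) ^ 2 / (2 * σb ^ 2))) := by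
        rw [hC, hE, Real.exp_add]
    _ = _ := by ring

set_option maxHeartbeats 1000000 in
/-- First circular moment of the renormalized product of two wrapped normal densities. -/
theorem wn_product_first_moment (μ₁ μ₂ σ₁ σ₂ : ℝ) (hσ₁ : 0 < σ₁) (hσ₂ : 0 < σ₂)
    (μjk : ℤ → ℤ → ℝ) (σbar : ℝ) (w : ℤ → ℤ → ℝ)
    (hμjk : ∀ j k : ℤ, μjk j k =
      ((μ₁ + 2 * Real.pi * (j : ℝ)) * σ₂ ^ 2 + (μ₂ + 2 * Real.pi * (k : ℝ)) * σ₁ ^ 2) /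
        (σ₁ ^ 2 + σ₂ ^ 2))
    (hσbar : σbar = Real.sqrt (σ₁ ^ 2 * σ₂ ^ 2 / (σ₁ ^ 2 + σ₂ ^ 2)))
    (hw : ∀ j k : ℤ, w j k =
      Real.exp (-((μ₁ + 2 * Real.pi * (j : ℝ)) - (μ₂ + 2 * Real.pi * (k : ℝ))) ^ 2 /
          (2 * (σ₁ ^ 2 + σ₂ ^ 2))) / Real.sqrt (2 * Real.pi * (σ₁ ^ 2 + σ₂ ^ 2))) :
    (∫ x in (0 : ℝ)..(2 * Real.pi),
        Complex.exp (Complex.I * (x : ℂ)) * ((wnDensity μ₁ σ₁ x * wnDensity μ₂ σ₂ x : ℝ) : ℂ)) /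
      ((∫ x in (0 : ℝ)..(2 * Real.pi), wnDensity μ₁ σ₁ x * wnDensity μ₂ σ₂ x : ℝ) : ℂ) =
    (∑' p : ℤ × ℤ, (w p.1 p.2 : ℂ) *
        ∫ x in (0 : ℝ)..(2 * Real.pi),
          Complex.exp (Complex.I * (x : ℂ)) * ((gaussDensity (μjk p.1 p.2) σbar x : ℝ) : ℂ)) /
      ((∑' p : ℤ × ℤ, w p.1 p.2 *
          ∫ x in (0 : ℝ)..(2 * Real.pi), gaussDensity (μjk p.1 p.2) σbar x : ℝ) : ℂ) := by
  have hπ := Real.pi_pos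
  have hs : (0:ℝ) < σ₁ ^ 2 + σ₂ ^ 2 := by positivity
  have hσb : 0 < σbar := hσbar ▸ Real.sqrt_pos.2 (by positivity)
  have h02 : (0:ℝ) ≤ 2 * Real.pi := by positivity
  set F : ℤ × ℤ → ℝ → ℝ := fun p x => w p.1 p.2 * gaussDensity (μjk p.1 p.2) σbar x with hFdef
  -- w is nonnegative
  have hwnn : ∀ j k : ℤ, 0 ≤ w j k := by
    intro j k; rw [hw]; positivity
  -- F in product form
  have hFform : ∀ p : ℤ × ℤ, ∀ x : ℝ, F p x =
      gaussDensity (μ₁ + 2 * Real.pi * p.1) σ₁ x * gaussDensity (μ₂ + 2 * Real.pi * p.2) σ₂ x := by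
    intro p x
    rw [hFdef]
    dsimp only
    rw [hw, hμjk, hσbar, gauss_product σ₁ σ₂ hσ₁ hσ₂]
  -- the uniform bound
  set B : ℤ × ℤ → ℝ := fun p =>
    ((1 / (Real.sqrt (2 * Real.pi) * σ₁)) *
      Real.exp ((2 * Real.pi * (|μ₁| + 2 * Real.pi) / σ₁ ^ 2) * |(p.1 : ℝ)|
        - (2 * Real.pi ^ 2 / σ₁ ^ 2) * (p.1 : ℝ) ^ 2)) *
    ((1 / (Real.sqrt (2 * Real.pi) * σ₂)) *
      Real.exp ((2 * Real.pi * (|μ₂| + 2 * Real.pi) / σ₂ ^ 2) * |(p.2 : ℝ)|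
        - (2 * Real.pi ^ 2 / σ₂ ^ 2) * (p.2 : ℝ) ^ 2)) with hBdef
  have hBsum : Summable B :=
    Summable.mul_of_nonneg
      ((summable_exp_lin_quad _ _ (by positivity)).mul_left _)
      ((summable_exp_lin_quad _ _ (by positivity)).mul_left _)
      (fun j => by positivity) (fun k => by positivity)
  have hFle : ∀ p : ℤ × ℤ, ∀ x ∈ Set.Ioc (0:ℝ) (2 * Real.pi), F p x ≤ B p := by
    intro p x hx
    have hx' : |x| ≤ 2 * Real.pi := abs_le.2 ⟨by linarith [hx.1], hx.2⟩
    rw [hFform]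
    exact mul_le_mul (gaussDensity_bound μ₁ σ₁ x hσ₁ hx' p.1)
      (gaussDensity_bound μ₂ σ₂ x hσ₂ hx' p.2)
      (gaussDensity_nonneg _ _ _ hσ₂) (by positivity)
  have hFnn : ∀ p : ℤ × ℤ, ∀ x : ℝ, 0 ≤ F p x := fun p x =>
    mul_nonneg (hwnn p.1 p.2) (gaussDensity_nonneg _ _ _ hσb)
  -- pointwise product identity on Ioc
  have hprod : ∀ x ∈ Set.Ioc (0:ℝ) (2 * Real.pi),
      wnDensity μ₁ σ₁ x * wnDensity μ₂ σ₂ x = ∑' p : ℤ × ℤ, F p x := by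
    intro x hx
    have hx' : |x| ≤ 2 * Real.pi := abs_le.2 ⟨by linarith [hx.1], hx.2⟩
    have hsum1 : Summable fun j : ℤ => gaussDensity (μ₁ + 2 * Real.pi * j) σ₁ x :=
      Summable.of_nonneg_of_le (fun j => gaussDensity_nonneg _ _ _ hσ₁)
        (fun j => gaussDensity_bound μ₁ σ₁ x hσ₁ hx' j)
        ((summable_exp_lin_quad _ _ (by positivity)).mul_left _)
    have hsum2 : Summable fun j : ℤ => gaussDensity (μ₂ + 2 * Real.pi * j) σ₂ x :=
      Summable.of_nonneg_of_le (fun j => gaussDensity_nonneg _ _ _ hσ₂)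
        (fun j => gaussDensity_bound μ₂ σ₂ x hσ₂ hx' j)
        ((summable_exp_lin_quad _ _ (by positivity)).mul_left _)
    have hn1 : Summable fun j : ℤ => ‖gaussDensity (μ₁ + 2 * Real.pi * j) σ₁ x‖ :=
      hsum1.congr fun j => (Real.norm_of_nonneg (gaussDensity_nonneg _ _ _ hσ₁)).symm
    have hn2 : Summable fun j : ℤ => ‖gaussDensity (μ₂ + 2 * Real.pi * j) σ₂ x‖ :=
      hsum2.congr fun j => (Real.norm_of_nonneg (gaussDensity_nonneg _ _ _ hσ₂)).symm
    rw [wnDensity_eq_tsum, wnDensity_eq_tsum, tsum_mul_tsum_of_summable_norm hn1 hn2]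
    exact tsum_congr fun p => (hFform p x).symm
  -- integrability and summability of integral norms
  have hFint : ∀ p : ℤ × ℤ, IntegrableOn (F p) (Set.Ioc 0 (2 * Real.pi)) :=
    fun p => (Continuous.integrableOn_Ioc (by
      rw [hFdef]; exact continuous_const.mul (gaussDensity_continuous _ _)))
  have hIoc_lt : volume (Set.Ioc (0:ℝ) (2 * Real.pi)) < ⊤ := by
    rw [Real.volume_Ioc]; exact ENNReal.ofReal_lt_top
  have hnormle : ∀ p : ℤ × ℤ,
      (∫ x in Set.Ioc (0:ℝ) (2 * Real.pi), ‖F p x‖) ≤ 2 * Real.pi * B p := by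
    intro p
    have h1 : (∫ x in Set.Ioc (0:ℝ) (2 * Real.pi), ‖F p x‖) ≤
        ∫ _x in Set.Ioc (0:ℝ) (2 * Real.pi), B p := by
      apply setIntegral_mono_on (hFint p).norm
        (integrableOn_const hIoc_lt.ne (by simp)) measurableSet_Ioc
      intro x hx
      rw [Real.norm_of_nonneg (hFnn p x)]
      exact hFle p x hx
    have h2 : (∫ _x in Set.Ioc (0:ℝ) (2 * Real.pi), B p) = 2 * Real.pi * B p := by
      rw [setIntegral_const, measureReal_def, Real.volume_Ioc, sub_zero, ENNReal.toReal_ofReal h02, smul_eq_mul]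
    linarith [h1, h2.le, h2.ge]
  have hnormsum : Summable fun p : ℤ × ℤ => ∫ x in Set.Ioc (0:ℝ) (2 * Real.pi), ‖F p x‖ :=
    Summable.of_nonneg_of_le (fun p => integral_nonneg fun x => norm_nonneg _)
      hnormle (hBsum.mul_left _)
  -- denominator identity
  have hden : (∫ x in (0:ℝ)..(2 * Real.pi), wnDensity μ₁ σ₁ x * wnDensity μ₂ σ₂ x) =
      ∑' p : ℤ × ℤ, w p.1 p.2 *
        ∫ x in (0:ℝ)..(2 * Real.pi), gaussDensity (μjk p.1 p.2) σbar x := by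
    rw [intervalIntegral.integral_of_le h02,
      setIntegral_congr_fun measurableSet_Ioc hprod,
      ← integral_tsum_of_summable_integral_norm hFint hnormsum]
    apply tsum_congr
    intro p
    rw [intervalIntegral.integral_of_le h02, ← integral_const_mul]
  -- numerator
  set G : ℤ × ℤ → ℝ → ℂ := fun p x => Complex.exp (Complex.I * (x : ℂ)) * ((F p x : ℝ) : ℂ)
    with hGdef
  have hGnorm : ∀ p : ℤ × ℤ, ∀ x : ℝ, ‖G p x‖ = ‖F p x‖ := by
    intro p x
    rw [hGdef]
    dsimp only
    rw [norm_mul, Complex.norm_exp]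
    simp [Complex.norm_real]
  have hGint : ∀ p : ℤ × ℤ, IntegrableOn (G p) (Set.Ioc 0 (2 * Real.pi)) := by
    intro p
    apply Continuous.integrableOn_Ioc
    rw [hGdef]
    apply Continuous.mul
    · exact Complex.continuous_exp.comp (continuous_const.mul Complex.continuous_ofReal)
    · exact Complex.continuous_ofReal.comp (continuous_const.mul (gaussDensity_continuous _ _))
  have hGnormsum : Summable fun p : ℤ × ℤ => ∫ x in Set.Ioc (0:ℝ) (2 * Real.pi), ‖G p x‖ :=
    hnormsum.congr fun p => by
      exact (setIntegral_congr_fun measurableSet_Ioc fun x _ => (hGnorm p x).symm)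
  have hnum : (∫ x in (0:ℝ)..(2 * Real.pi),
        Complex.exp (Complex.I * (x : ℂ)) * ((wnDensity μ₁ σ₁ x * wnDensity μ₂ σ₂ x : ℝ) : ℂ)) =
      ∑' p : ℤ × ℤ, (w p.1 p.2 : ℂ) *
        ∫ x in (0:ℝ)..(2 * Real.pi),
          Complex.exp (Complex.I * (x : ℂ)) * ((gaussDensity (μjk p.1 p.2) σbar x : ℝ) : ℂ) := by
    rw [intervalIntegral.integral_of_le h02]
    have hpt : ∀ x ∈ Set.Ioc (0:ℝ) (2 * Real.pi),
        Complex.exp (Complex.I * (x : ℂ)) * ((wnDensity μ₁ σ₁ x * wnDensity μ₂ σ₂ x : ℝ) : ℂ)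
          = ∑' p : ℤ × ℤ, G p x := by
      intro x hx
      rw [hprod x hx, Complex.ofReal_tsum, ← tsum_mul_left]
    rw [setIntegral_congr_fun measurableSet_Ioc hpt,
      ← integral_tsum_of_summable_integral_norm hGint hGnormsum]
    apply tsum_congr
    intro p
    rw [intervalIntegral.integral_of_le h02, ← integral_const_mul]
    apply setIntegral_congr_fun measurableSet_Ioc
    intro x _
    rw [hGdef]
    dsimp only
    rw [Complex.ofReal_mul]
    ring
  rw [hnum, hden]
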